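/- Let K be a field of characteristic 0, G a group, N a normal subgroup of G of finite index, and V a K-linear representation of G which is finite-dimensional over K. Then V is semisimple as a representation of G if and only if its restriction to N is semisimple as a representation of N. -/

import Mathlib

namespace CliffordHelpers

variable {K : Type*} [Field K] {V : Type*} [AddCommGroup V] [Module K V]
variable {H : Type*} [Group H] (σ : Representation K H V)

/-- `Finsupp.single` seen in the monoid algebra. -/
noncomputable def msingle (h : H) (c : K) : MonoidAlgebra K H := MonoidAlgebra.single h c

theorem single_smul (h : H) (c : K) (x : σ.asModule) :
    msingle h c • x = c • σ h x := by
  show σ.asAlgebraHom _ x = _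
  rw [msingle, Representation.asAlgebraHom_single]
  rfl

theorem ksmul_eq (c : K) (x : σ.asModule) :
    c • x = msingle (1 : H) c • x := by
  rw [single_smul, map_one]
  rfl

variable (q : Submodule (MonoidAlgebra K H) σ.asModule)

theorem ksmul_mem (c : K) {x : σ.asModule} (hx : x ∈ q) : c • x ∈ q := by
  rw [ksmul_eq]
  exact q.smul_mem _ hx

theorem rho_mem (g : H) {x : σ.asModule} (hx : x ∈ q) : σ g x ∈ q := by
  have h := q.smul_mem (msingle g (1 : K)) hx
  rwa [single_smul, one_smul] at h

/-- The underlying `K`-subspace of a `MonoidAlgebra K H`-submodule. -/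
def toK : Submodule K V where
  carrier := {x : V | x ∈ q}
  add_mem' := fun h1 h2 => q.add_mem h1 h2
  zero_mem' := q.zero_mem
  smul_mem' := fun c x hx => ksmul_mem σ q c hx

@[simp] theorem mem_toK (x : V) : x ∈ toK σ q ↔ x ∈ q := Iff.rfl

/-- An invariant `K`-subspace as a `MonoidAlgebra K H`-submodule. -/
def ofInvt (W : Submodule K V) (hW : ∀ g : H, ∀ x ∈ W, σ g x ∈ W) :
    Submodule (MonoidAlgebra K H) σ.asModule where
  carrier := {x : σ.asModule | x ∈ W}
  add_mem' := fun h1 h2 => W.add_mem h1 h2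
  zero_mem' := W.zero_mem
  smul_mem' := by
    intro a x hx
    show a • x ∈ W
    induction a using MonoidAlgebra.induction_on with
    | of g =>
        have h : (MonoidAlgebra.of K H g) • x = σ g x := by
          rw [show MonoidAlgebra.of K H g = msingle g (1 : K) from rfl, single_smul, one_smul]
        rw [h]
        exact hW g x hx
    | add a b ha hb =>
        have h : ((a + b) • x : σ.asModule) = a • x + b • x := add_smul _ _ _
        rw [h]
        exact W.add_mem ha hb
    | smul r a ha =>
        have h1 : r • a = msingle (1 : H) r * a := by
          rw [show msingle (1 : H) r = algebraMap K (MonoidAlgebra K H) r from rfl,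
            ← Algebra.smul_def]
        have h2 : ((r • a) • x : σ.asModule) = r • (a • x) := by
          rw [h1, mul_smul, ← ksmul_eq]
        rw [h2]
        exact W.smul_mem r ha

@[simp] theorem mem_ofInvt (W : Submodule K V) (hW) (x : V) :
    x ∈ ofInvt σ W hW ↔ x ∈ W := Iff.rfl

theorem toK_strictMono :
    StrictMono (fun q : Submodule (MonoidAlgebra K H) σ.asModule => toK σ q) := by
  intro q q' h
  rw [lt_iff_le_and_ne] at h ⊢
  refine ⟨fun x hx => h.1 hx, fun he => h.2 ?_⟩
  have he' : toK σ q = toK σ q' := he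
  ext x
  exact ⟨fun hx => (mem_toK σ q' x).1 (by rw [← he']; exact (mem_toK σ q x).2 hx),
    fun hx => (mem_toK σ q x).1 (by rw [he']; exact (mem_toK σ q' x).2 hx)⟩

theorem wfLT [FiniteDimensional K V] :
    WellFoundedLT (Submodule (MonoidAlgebra K H) σ.asModule) :=
  (toK_strictMono σ).wellFoundedLT

end CliffordHelpers

namespace CliffordHelpers

section Conj

variable {K : Type*} [Field K] {G : Type*} [Group G] (N : Subgroup G) [N.Normal]
  {V : Type*} [AddCommGroup V] [Module K V] (ρ : Representation K G V)

theorem mul_app (g g' : G) (y : V) : ρ g (ρ g' y) = ρ (g * g') y := by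
  rw [map_mul]; rfl

/-- Conjugation of an `N`-submodule by `g`: the preimage under `ρ g`. -/
noncomputable def conjSub (g : G) (W : Submodule (MonoidAlgebra K ↥N) (Representation.asModule (ρ.comp N.subtype))) :
    Submodule (MonoidAlgebra K ↥N) (Representation.asModule (ρ.comp N.subtype)) :=
  ofInvt (ρ.comp N.subtype) ((toK (ρ.comp N.subtype) W).comap (ρ g)) (by
    intro n x hx
    simp only [Submodule.mem_comap, mem_toK] at hx ⊢
    have key : ρ g ((ρ.comp N.subtype) n x)
        = (ρ.comp N.subtype) ⟨g * ↑n * g⁻¹, ‹N.Normal›.conj_mem ↑n n.2 g⟩ (ρ g x) := by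
      show ρ g (ρ ↑n x) = ρ (g * ↑n * g⁻¹) (ρ g x)
      rw [mul_app, mul_app, inv_mul_cancel_right]
    rw [key]
    exact rho_mem _ W _ hx)

theorem mem_conjSub {g : G} {W} {x : V} : x ∈ conjSub N ρ g W ↔ ρ g x ∈ W := Iff.rfl

theorem conjSub_conjSub (g : G) (W) : conjSub N ρ g⁻¹ (conjSub N ρ g W) = W := by
  ext (x : V)
  change ρ g (ρ g⁻¹ x) ∈ W ↔ x ∈ W
  have h : ρ g (ρ g⁻¹ x) = x := by
    rw [mul_app, mul_inv_cancel, map_one]; rfl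
  constructor
  · intro hx; exact h ▸ hx
  · intro hx; exact h.symm ▸ hx

theorem conjSub_mono (g : G) : Monotone (conjSub N ρ g) := by
  intro W W' h x hx
  exact h ((mem_conjSub N ρ).1 hx)

/-- Conjugation as an order isomorphism of the lattice of `N`-submodules. -/
noncomputable def conjIso (g : G) :
    Submodule (MonoidAlgebra K ↥N) (Representation.asModule (ρ.comp N.subtype)) ≃o
      Submodule (MonoidAlgebra K ↥N) (Representation.asModule (ρ.comp N.subtype)) :=
  Equiv.toOrderIso
    ⟨conjSub N ρ g, conjSub N ρ g⁻¹, fun W => by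
        have h := conjSub_conjSub N ρ g W; exact h, fun W => by
        have h := conjSub_conjSub N ρ g⁻¹ W; rwa [inv_inv] at h⟩
    (conjSub_mono N ρ g) (conjSub_mono N ρ g⁻¹)

end Conj

end CliffordHelpers

namespace CliffordHelpers

section Avg

variable {K : Type*} [Field K] {G : Type*} [Group G] (N : Subgroup G)
  {V : Type*} [AddCommGroup V] [Module K V] (ρ : Representation K G V)
  [Fintype (G ⧸ N)]

/-- The average over a transversal of `N` of the conjugates of `f`. -/
noncomputable def TK (f : V →ₗ[K] V) : V →ₗ[K] V :=
  (N.index : K)⁻¹ • ∑ c : G ⧸ N, (ρ (Quotient.out c)) ∘ₗ (f ∘ₗ (ρ (Quotient.out c)⁻¹))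

theorem TK_apply (f : V →ₗ[K] V) (x : V) :
    TK N ρ f x = (N.index : K)⁻¹ •
      ∑ c : G ⧸ N, ρ (Quotient.out c) (f (ρ (Quotient.out c)⁻¹ x)) := by
  simp [TK, LinearMap.sum_apply]

theorem TK_conj [N.Normal] (f : V →ₗ[K] V)
    (hf : ∀ (n : ↥N) (x : V), f (ρ ↑n x) = ρ ↑n (f x)) (h : G) (x : V) :
    TK N ρ f (ρ h x) = ρ h (TK N ρ f x) := by
  rw [TK_apply, TK_apply, map_smul]
  congr 1
  rw [map_sum]
  refine Fintype.sum_equiv (Equiv.mulLeft ((QuotientGroup.mk h : G ⧸ N)⁻¹)) _ _ ?_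
  intro c
  set a := Quotient.out c with ha
  set b := Quotient.out ((QuotientGroup.mk h : G ⧸ N)⁻¹ * c) with hb
  have hmka : (QuotientGroup.mk a : G ⧸ N) = c := QuotientGroup.out_eq' c
  have hmkb : (QuotientGroup.mk b : G ⧸ N) = (QuotientGroup.mk h : G ⧸ N)⁻¹ * c :=
    QuotientGroup.out_eq' _
  have hn : a⁻¹ * h * b ∈ N := by
    rw [← QuotientGroup.eq_one_iff]
    have : (QuotientGroup.mk (a⁻¹ * h * b) : G ⧸ N)
        = (QuotientGroup.mk a : G ⧸ N)⁻¹ * QuotientGroup.mk h * QuotientGroup.mk b := by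
      simp [QuotientGroup.mk_mul, QuotientGroup.mk_inv]
    rw [this, hmka, hmkb]
    group
  set n : ↥N := ⟨a⁻¹ * h * b, hn⟩ with hn'
  show ρ a (f (ρ a⁻¹ (ρ h x))) = ρ h (ρ b (f (ρ b⁻¹ x)))
  rw [mul_app ρ a⁻¹ h x]
  have key1 : a⁻¹ * h = ↑n * b⁻¹ := by
    rw [hn']; simp [mul_assoc]
  rw [key1, ← mul_app ρ (↑n) b⁻¹ x, hf n]
  rw [mul_app, mul_app]
  have : a * ↑n = h * b := by rw [hn']; simp; group
  rw [this]

end Avg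

end CliffordHelpers

namespace CliffordHelpers

variable {K : Type*} [Field K] {V : Type*} [AddCommGroup V] [Module K V]
variable {H : Type*} [Group H] (σ : Representation K H V)

theorem ksmul_assoc (r : K) (a : MonoidAlgebra K H) (x : σ.asModule) :
    (r • a) • x = r • (a • x) := by
  have h1 : r • a = msingle (1 : H) r * a := by
    rw [show msingle (1 : H) r = algebraMap K (MonoidAlgebra K H) r from rfl, ← Algebra.smul_def]
  rw [h1, mul_smul, ← ksmul_eq]

end CliffordHelpers


open CliffordHelpers

/-- Let `K` be a field of characteristic `0`, `G` a group, `N` a normal subgroup of finite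
index, and `V` a finite-dimensional `K`-linear representation of `G`. Then `V` is semisimple
as a representation of `G` if and only if its restriction to `N` is semisimple as a
representation of `N`. -/
theorem semisimple_iff_restriction_semisimple
    (K : Type*) [Field K] [CharZero K] (G : Type*) [Group G]
    (N : Subgroup G) [N.Normal] [N.FiniteIndex]
    (V : Type*) [AddCommGroup V] [Module K V] [FiniteDimensional K V]
    (ρ : Representation K G V) :
    IsSemisimpleModule (MonoidAlgebra K G) ρ.asModule ↔
      IsSemisimpleModule (MonoidAlgebra K ↥N) (Representation.asModule (ρ.comp N.subtype)) := by
  constructor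
  · -- Clifford's theorem direction
    intro hG
    haveI : IsAtomic (Submodule (MonoidAlgebra K ↥N) (Representation.asModule (ρ.comp N.subtype))) :=
      isAtomic_of_orderBot_wellFounded_lt (wfLT (ρ.comp N.subtype)).wf
    set S : Submodule (MonoidAlgebra K ↥N) (Representation.asModule (ρ.comp N.subtype)) :=
      sSup {W | IsAtom W} with hS
    have hSconj : ∀ g : G, conjSub N ρ g S = S := by
      intro g
      have h1 : conjSub N ρ g S = (conjIso N ρ g) S := rfl
      have himg : (conjIso N ρ g) '' {W | IsAtom W} = {W | IsAtom W} := by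
        ext W
        constructor
        · rintro ⟨W', hW', rfl⟩
          exact ((conjIso N ρ g).isAtom_iff W').2 hW'
        · intro hW
          refine ⟨conjSub N ρ g⁻¹ W, ?_, ?_⟩
          · have h2 : (conjIso N ρ g) (conjSub N ρ g⁻¹ W) = W := by
              show conjSub N ρ g (conjSub N ρ g⁻¹ W) = W
              have h := conjSub_conjSub N ρ g⁻¹ W
              rwa [inv_inv] at h
            have h3 := ((conjIso N ρ g).isAtom_iff (conjSub N ρ g⁻¹ W))
            rw [h2] at h3
            exact h3.1 hW
          · show conjSub N ρ g (conjSub N ρ g⁻¹ W) = W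
            have h := conjSub_conjSub N ρ g⁻¹ W
            rwa [inv_inv] at h
      rw [h1, hS, OrderIso.map_sSup, ← sSup_image, himg]
    have hSinvt : ∀ g : G, ∀ x ∈ toK (ρ.comp N.subtype) S, ρ g x ∈ toK (ρ.comp N.subtype) S := by
      intro g x hx
      have h1 : x ∈ conjSub N ρ g S := by rw [hSconj g]; exact hx
      exact (mem_conjSub N ρ).1 h1
    set SA : Submodule (MonoidAlgebra K G) ρ.asModule :=
      ofInvt ρ (toK (ρ.comp N.subtype) S) hSinvt with hSA
    haveI := hG
    obtain ⟨C, hC⟩ := exists_isCompl SA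
    have hCbot : C = ⊥ := by
      by_contra hne
      obtain ⟨x, hxC, hx0⟩ := (Submodule.ne_bot_iff C).1 hne
      set resC : Submodule (MonoidAlgebra K ↥N) (Representation.asModule (ρ.comp N.subtype)) :=
        ofInvt (ρ.comp N.subtype) (toK ρ C) (fun n y hy => rho_mem ρ C ↑n hy) with hresC
      have hne' : resC ≠ ⊥ := by
        have hx' : (show Representation.asModule (ρ.comp N.subtype) from x) ∈ resC := hxC
        have hx0' : (show Representation.asModule (ρ.comp N.subtype) from x) ≠ 0 := hx0
        exact (Submodule.ne_bot_iff resC).2 ⟨_, hx', hx0'⟩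
      obtain ⟨W, hWatom, hWle⟩ := (eq_bot_or_exists_atom_le resC).resolve_left hne'
      have hWS : W ≤ S := le_sSup hWatom
      have hWbot : W = ⊥ := by
        rw [eq_bot_iff]
        intro y hy
        have hyC : y ∈ C := hWle hy
        have hySA : y ∈ SA := (mem_ofInvt ρ _ _ y).2 ((mem_toK _ S y).2 (hWS hy))
        have hmem : y ∈ SA ⊓ C := ⟨hySA, hyC⟩
        rw [hC.inf_eq_bot] at hmem
        exact hmem
      exact hWatom.1 hWbot
    have hSAtop : SA = ⊤ := codisjoint_bot.mp (hCbot ▸ hC.codisjoint)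
    have hStop : S = ⊤ := by
      rw [eq_top_iff]
      intro y _
      have hy : (show ρ.asModule from y) ∈ SA := hSAtop ▸ Submodule.mem_top
      exact hy
    rw [isSemisimpleModule_iff]
    exact complementedLattice_of_sSup_atoms_eq_top hStop
  · -- averaging direction
    intro hN
    haveI : Fintype (G ⧸ N) := Fintype.ofFinite _
    rw [isSemisimpleModule_iff]
    refine ⟨fun p => ?_⟩
    set resP : Submodule (MonoidAlgebra K ↥N) (Representation.asModule (ρ.comp N.subtype)) :=
      ofInvt (ρ.comp N.subtype) (toK ρ p) (fun n y hy => rho_mem ρ p ↑n hy) with hresP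
    haveI := hN
    obtain ⟨q, hq⟩ := exists_isCompl resP
    set fB := resP.subtype ∘ₗ (resP.linearProjOfIsCompl q hq) with hfB
    have hfB_rho : ∀ (n : ↥N) (y : V), fB ((ρ.comp N.subtype) n y) = (ρ.comp N.subtype) n (fB y) := by
      intro n y
      have h := map_smul fB (msingle n (1 : K))
        (show Representation.asModule (ρ.comp N.subtype) from y)
      rwa [single_smul, one_smul, single_smul, one_smul] at h
    have hfB_k : ∀ (c : K) (y : V), fB (c • y) = c • fB y := by
      intro c y
      have h := map_smul fB (msingle (1 : ↥N) c)
        (show Representation.asModule (ρ.comp N.subtype) from y)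
      rwa [← ksmul_eq, ← ksmul_eq] at h
    set fK : V →ₗ[K] V :=
      { toFun := fun y => fB y
        map_add' := fun a b => map_add fB a b
        map_smul' := fun c y => hfB_k c y } with hfK
    have hfK_mem : ∀ y : V, fK y ∈ p := by
      intro y
      have h : fB y ∈ resP := Submodule.coe_mem (resP.linearProjOfIsCompl q hq y)
      exact h
    have hfK_id : ∀ y ∈ p, fK y = y := by
      intro y hy
      have hy' : y ∈ resP := hy
      show fB y = y
      have h1 : fB y = ↑(resP.linearProjOfIsCompl q hq ((⟨y, hy'⟩ : resP) : Representation.asModule (ρ.comp N.subtype))) := rfl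
      rw [h1]
      exact congrArg Subtype.val (Submodule.linearProjOfIsCompl_apply_left hq ⟨y, hy'⟩)
    have hfK_rho : ∀ (n : ↥N) (y : V), fK (ρ ↑n y) = ρ ↑n (fK y) := fun n y => hfB_rho n y
    set T' : ρ.asModule → ρ.asModule := fun x => TK N ρ fK x with hT'
    set P : ρ.asModule →ₗ[MonoidAlgebra K G] ρ.asModule :=
      { toFun := T'
        map_add' := fun a b => map_add (TK N ρ fK) a b
        map_smul' := by
          intro a x
          show T' (a • x) = a • T' x
          induction a using MonoidAlgebra.induction_on with
          | of g =>
              show T' ((msingle g (1 : K) : MonoidAlgebra K G) • x)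
                = (msingle g (1 : K) : MonoidAlgebra K G) • T' x
              rw [single_smul, single_smul, one_smul, one_smul]
              exact TK_conj N ρ fK hfK_rho g x
          | add a b ha hb =>
              calc T' ((a + b) • x) = T' (a • x + b • x) := by
                    rw [show ((a + b) • x : ρ.asModule) = a • x + b • x from add_smul _ _ _]
                _ = T' (a • x) + T' (b • x) := map_add (TK N ρ fK) _ _
                _ = a • T' x + b • T' x := by rw [ha, hb]
                _ = (a + b) • T' x := (add_smul a b (T' x)).symm
          | smul r a ha =>
              calc T' ((r • a) • x) = T' (r • (a • x)) := by rw [ksmul_assoc ρ r a x]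
                _ = r • T' (a • x) := map_smul (TK N ρ fK) r _
                _ = r • (a • T' x) := by rw [ha]
                _ = (r • a) • T' x := (ksmul_assoc ρ r a (T' x)).symm } with hP
    have hPmem : ∀ x : V, P x ∈ p := by
      intro x
      show TK N ρ fK x ∈ p
      rw [TK_apply]
      refine ksmul_mem ρ p _ (Submodule.sum_mem p fun c _ => ?_)
      exact rho_mem ρ p _ (hfK_mem _)
    have hPid : ∀ x ∈ p, P x = x := by
      intro x hx
      change V at x
      show TK N ρ fK x = x
      rw [TK_apply]
      have hterm : ∀ c : G ⧸ N, ρ (Quotient.out c) (fK (ρ (Quotient.out c)⁻¹ x)) = x := by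
        intro c
        rw [hfK_id _ (rho_mem ρ p (Quotient.out c)⁻¹ hx), mul_app, mul_inv_cancel, map_one]
        rfl
      rw [Finset.sum_congr rfl (fun c _ => hterm c), Finset.sum_const, Finset.card_univ]
      have hcard : N.index = Fintype.card (G ⧸ N) := Nat.card_eq_fintype_card
      rw [← hcard, ← Nat.cast_smul_eq_nsmul K, smul_smul,
        inv_mul_cancel₀ (Nat.cast_ne_zero.2 Subgroup.FiniteIndex.index_ne_zero), one_smul]
    refine ⟨LinearMap.ker P, ?_, ?_⟩
    · rw [disjoint_iff, eq_bot_iff]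
      rintro x ⟨hxp, hxk⟩
      have h0 : P x = 0 := LinearMap.mem_ker.1 hxk
      have hx : P x = x := hPid x hxp
      rw [hx] at h0
      exact h0 ▸ Submodule.zero_mem ⊥
    · rw [codisjoint_iff, eq_top_iff]
      intro x _
      have hker : x - P x ∈ LinearMap.ker P := by
        rw [LinearMap.mem_ker, map_sub, hPid (P x) (hPmem x), sub_self]
      exact Submodule.mem_sup.2 ⟨P x, hPmem x, x - P x, hker, by abel⟩
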